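/- Let 0 → A → B → C → 0 be a short exact sequence of finitely generated abelian groups equipped with compatible endomorphisms φ, and q a prime. If φ acts as multiplication by λ on A ⊗ ℤ/q and by μ on C ⊗ ℤ/q with λ ≢ μ (mod q), then the q-torsion of B is isomorphic to the direct sum of the q-torsion of A and the q-torsion of C. -/

import Mathlib

/-- The `q`-primary torsion subgroup of an abelian group: elements killed by a power of `q`. -/
def qPrimaryTorsion (q : ℕ) (A : Type*) [AddCommGroup A] : AddSubgroup A where
  carrier := {a | ∃ k : ℕ, q ^ k • a = 0}
  zero_mem' := ⟨0, smul_zero _⟩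
  add_mem' := by
    rintro a b ⟨k, hk⟩ ⟨l, hl⟩
    have ha : q ^ (k + l) • a = 0 := by rw [pow_add, mul_comm, mul_smul, hk, smul_zero]
    have hb : q ^ (k + l) • b = 0 := by rw [pow_add, mul_smul, hl, smul_zero]
    exact ⟨k + l, by rw [smul_add, ha, hb, add_zero]⟩
  neg_mem' := by rintro a ⟨k, hk⟩; exact ⟨k, by rw [smul_neg, hk, neg_zero]⟩

lemma QPT.zpow_smul_eq {q : ℕ} {G : Type*} [AddCommGroup G] (k : ℕ) (x : G) :
    (q : ℤ) ^ k • x = q ^ k • x := by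
  rw [← Nat.cast_pow, natCast_zsmul]

lemma QPT.mem_iff {q : ℕ} {G : Type*} [AddCommGroup G] {x : G} :
    x ∈ qPrimaryTorsion q G ↔ ∃ k : ℕ, (q : ℤ) ^ k • x = 0 := by
  constructor <;> rintro ⟨k, hk⟩ <;> refine ⟨k, ?_⟩
  · rw [QPT.zpow_smul_eq]; exact hk
  · rw [← QPT.zpow_smul_eq k x]; exact hk

lemma QPT.map {q : ℕ} {G G' : Type*} [AddCommGroup G] [AddCommGroup G'] (h : G →+ G') {x : G}
    (hx : x ∈ qPrimaryTorsion q G) : h x ∈ qPrimaryTorsion q G' := by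
  obtain ⟨k, hk⟩ := hx
  exact ⟨k, by rw [← map_nsmul, hk, map_zero]⟩

lemma QPT.of_smul {q : ℕ} {G : Type*} [AddCommGroup G] {x : G} (j : ℕ)
    (hx : (q : ℤ) ^ j • x ∈ qPrimaryTorsion q G) : x ∈ qPrimaryTorsion q G := by
  obtain ⟨k, hk⟩ := QPT.mem_iff.mp hx
  refine QPT.mem_iff.mpr ⟨k + j, ?_⟩
  rw [pow_add, mul_smul, hk]

lemma QPT.bezout_smul {G : Type*} [AddCommGroup G] {x y a b : ℤ} (h : x * a + y * b = 1)
    {z : G} (hz : b • z = 0) : z = x • a • z := by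
  have h2 : (x * a + y * b) • z = z := by rw [h, one_smul]
  rw [add_smul, mul_smul, mul_smul, hz, smul_zero, add_zero] at h2
  exact h2.symm

lemma QPT.end_pow_succ {M : Type*} [AddCommMonoid M] (h : AddMonoid.End M) (j : ℕ) (a : M) :
    (h ^ (j + 1)) a = h ((h ^ j) a) := by
  simp only [AddMonoid.End.coe_pow]
  exact Function.iterate_succ_apply' h j a

lemma QPT.end_pow_succ'' {M : Type*} [AddCommMonoid M] (h : AddMonoid.End M) (j : ℕ) (a : M) :
    (h ^ (j + 1)) a = (h ^ j) (h a) := by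
  simp only [AddMonoid.End.coe_pow]
  exact Function.iterate_succ_apply h j a

lemma QPT.exponent (q : ℕ) (G : Type*) [AddCommGroup G] (hfg : AddGroup.FG G) :
    ∃ N : ℕ, ∀ x ∈ qPrimaryTorsion q G, (q : ℤ) ^ N • x = 0 := by
  have : Module.Finite ℤ G := Module.Finite.iff_addGroup_fg.mpr hfg
  have hFG : (AddSubgroup.toIntSubmodule (qPrimaryTorsion q G)).FG :=
    IsNoetherian.noetherian _
  obtain ⟨S, hS⟩ := hFG
  classical
  set e : G → ℕ := fun s => if h : ∃ k : ℕ, (q:ℤ) ^ k • s = 0 then h.choose else 0 with he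
  refine ⟨S.sup e, fun x hx => ?_⟩
  have hle : Submodule.span ℤ (S : Set G) ≤ Submodule.torsionBy ℤ G ((q:ℤ) ^ S.sup e) := by
    rw [Submodule.span_le]
    intro s hs
    have hsmem : s ∈ qPrimaryTorsion q G := by
      have : s ∈ Submodule.span ℤ (S : Set G) := Submodule.subset_span hs
      rw [hS] at this
      exact this
    have hex : ∃ k : ℕ, (q:ℤ) ^ k • s = 0 := QPT.mem_iff.mp hsmem
    have h1 : e s ≤ S.sup e := Finset.le_sup hs
    have h2 : (q:ℤ) ^ (e s) • s = 0 := by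
      rw [he]; simp only [dif_pos hex]; exact hex.choose_spec
    rw [SetLike.mem_coe, Submodule.mem_torsionBy_iff]
    have : (q:ℤ) ^ S.sup e • s = (q:ℤ) ^ (S.sup e - e s) • ((q:ℤ) ^ (e s) • s) := by
      rw [← mul_smul, ← pow_add, Nat.sub_add_cancel h1]
    rw [this, h2, smul_zero]
  have hx' : x ∈ Submodule.span ℤ (S : Set G) := by rw [hS]; exact hx
  exact (hle hx')

/-- Let `0 → A → B → C → 0` be a short exact sequence of finitely generated abelian groups
with compatible endomorphisms `φA, φB, φC`, and `q` a prime.  If `φA` acts as multiplication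
by `lam` on `A ⊗ ℤ/q` and `φC` by `mu` on `C ⊗ ℤ/q` with `lam ≢ mu (mod q)`, then the
`q`-primary torsion of `B` is the direct sum of those of `A` and `C`. -/
theorem qtorsion_of_extension_splits (q : ℕ) (hq : q.Prime)
    (A B C : Type) [AddCommGroup A] [AddCommGroup B] [AddCommGroup C]
    (hfgA : AddGroup.FG A) (hfgB : AddGroup.FG B) (hfgC : AddGroup.FG C)
    (f : A →+ B) (g : B →+ C)
    (hf : Function.Injective f) (hg : Function.Surjective g)
    (hexact : f.range = g.ker)
    (φA : A →+ A) (φB : B →+ B) (φC : C →+ C)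
    (hcommf : ∀ a, φB (f a) = f (φA a)) (hcommg : ∀ b, φC (g b) = g (φB b))
    (lam mu : ℤ) (hlm : ¬ ((q : ℤ) ∣ (lam - mu)))
    (hA : ∀ a : A, ∃ a' : A, φA a - lam • a = (q : ℤ) • a')
    (hC : ∀ c : C, ∃ c' : C, φC c - mu • c = (q : ℤ) • c') :
    Nonempty ((qPrimaryTorsion q B) ≃+ (qPrimaryTorsion q A × qPrimaryTorsion q C)) := by
  classical
  obtain ⟨NA, hNA⟩ := QPT.exponent q A hfgA
  obtain ⟨NC, hNC⟩ := QPT.exponent q C hfgC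
  set N := max NA NC with hN
  have hNAle : NA ≤ N := le_max_left _ _
  have hNCle : NC ≤ N := le_max_right _ _
  have killA : ∀ a ∈ qPrimaryTorsion q A, (q:ℤ) ^ N • a = 0 := by
    intro a ha
    have : (q:ℤ) ^ N • a = (q:ℤ) ^ (N - NA) • ((q:ℤ) ^ NA • a) := by
      rw [← mul_smul, ← pow_add, Nat.sub_add_cancel hNAle]
    rw [this, hNA a ha, smul_zero]
  have killC : ∀ c ∈ qPrimaryTorsion q C, (q:ℤ) ^ N • c = 0 := by
    intro c hc
    have : (q:ℤ) ^ N • c = (q:ℤ) ^ (N - NC) • ((q:ℤ) ^ NC • c) := by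
      rw [← mul_smul, ← pow_add, Nat.sub_add_cancel hNCle]
    rw [this, hNC c hc, smul_zero]
  -- Bezout
  have hqZ : Prime (q : ℤ) := Int.prime_iff_natAbs_prime.mpr (by simpa using hq)
  have hcop : IsCoprime (mu - lam) ((q:ℤ)) := by
    have : ¬ (q:ℤ) ∣ (mu - lam) := by
      rw [show mu - lam = -(lam - mu) by ring, dvd_neg]; exact hlm
    exact ((hqZ.coprime_iff_not_dvd).mpr this).symm
  obtain ⟨x, y, hbez⟩ := (hcop.pow (m := N) (n := N))
  -- endomorphisms
  let dA : AddMonoid.End A := AddMonoidHom.mk' (fun a => φA a - lam • a)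
    (fun a b => by rw [map_add, smul_add]; abel)
  let dC : AddMonoid.End C := AddMonoidHom.mk' (fun c => φC c - mu • c)
    (fun a b => by rw [map_add, smul_add]; abel)
  let uA : AddMonoid.End A := AddMonoidHom.mk' (fun a => φA a - mu • a)
    (fun a b => by rw [map_add, smul_add]; abel)
  let uB : AddMonoid.End B := AddMonoidHom.mk' (fun b => φB b - mu • b)
    (fun a b => by rw [map_add, smul_add]; abel)
  let vB : AddMonoid.End B := AddMonoidHom.mk' (fun b => φB b - lam • b)
    (fun a b => by rw [map_add, smul_add]; abel)
  have hdA : ∀ a, dA a = φA a - lam • a := fun _ => rfl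
  have hdC : ∀ c, dC c = φC c - mu • c := fun _ => rfl
  have huA : ∀ a, uA a = φA a - mu • a := fun _ => rfl
  have huB : ∀ b, uB b = φB b - mu • b := fun _ => rfl
  have hvB : ∀ b, vB b = φB b - lam • b := fun _ => rfl
  have hdA' : ∀ a, ∃ a', dA a = (q:ℤ) • a' := hA
  have hdC' : ∀ c, ∃ c', dC c = (q:ℤ) • c' := hC
  -- commutation with f and g
  have hfvB : ∀ a, vB (f a) = f (dA a) := by
    intro a; rw [hvB, hdA, map_sub, map_zsmul, hcommf]
  have hfuB : ∀ a, uB (f a) = f (uA a) := by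
    intro a; rw [huB, huA, map_sub, map_zsmul, hcommf]
  have hguB : ∀ b, g (uB b) = dC (g b) := by
    intro b; rw [huB, hdC, map_sub, map_zsmul, hcommg]
  have hgvB : ∀ b, g (vB b) = φC (g b) - lam • g b := by
    intro b; rw [hvB, map_sub, map_zsmul, hcommg]
  -- iterated divisibility
  have hdAiter : ∀ (j : ℕ) (a : A), ∃ a', (dA ^ j) a = (q:ℤ) ^ j • a' := by
    intro j
    induction j with
    | zero => exact fun a => ⟨a, by rw [pow_zero, pow_zero, one_smul]; rfl⟩
    | succ j ih =>
      intro a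
      obtain ⟨a', ha'⟩ := ih a
      obtain ⟨a'', ha''⟩ := hdA' a'
      refine ⟨a'', ?_⟩
      rw [QPT.end_pow_succ, ha', map_zsmul, ha'', ← mul_smul, ← pow_succ]
  have hdCiter : ∀ (j : ℕ) (c : C), ∃ c', (dC ^ j) c = (q:ℤ) ^ j • c' := by
    intro j
    induction j with
    | zero => exact fun c => ⟨c, by rw [pow_zero, pow_zero, one_smul]; rfl⟩
    | succ j ih =>
      intro c
      obtain ⟨c', hc'⟩ := ih c
      obtain ⟨c'', hc''⟩ := hdC' c'
      refine ⟨c'', ?_⟩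
      rw [QPT.end_pow_succ, hc', map_zsmul, hc'', ← mul_smul, ← pow_succ]
  -- one-step lemma for surjectivity on torsion
  have step : ∀ e ∈ qPrimaryTorsion q C, ∀ t ∈ qPrimaryTorsion q B, g t = (q:ℤ) • e →
      ∃ s ∈ qPrimaryTorsion q B, g s = φC e - lam • e := by
    intro e _ t ht hgt
    obtain ⟨b, hb⟩ := hg e
    have hker : (q:ℤ) • b - t ∈ f.range := by
      rw [hexact]
      show g ((q:ℤ) • b - t) = 0
      rw [map_sub, map_zsmul, hb, hgt, sub_self]
    obtain ⟨a, ha⟩ := hker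
    obtain ⟨a', ha'⟩ := hA a
    have hqb : (q:ℤ) • b = t + f a := by rw [ha]; abel
    have h2 : dA a = (q:ℤ) • a' := by rw [hdA]; exact ha'
    have key : (q:ℤ) • (vB b - f a') = vB t := by
      have h1 : vB ((q:ℤ) • b) = vB t + f (dA a) := by rw [hqb, map_add, hfvB]
      rw [map_zsmul, h2, map_zsmul] at h1
      rw [smul_sub, h1]; abel
    have hsT : vB b - f a' ∈ qPrimaryTorsion q B :=
      QPT.of_smul 1 (by rw [pow_one, key]; exact QPT.map vB ht)
    refine ⟨vB b - f a', hsT, ?_⟩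
    have hfa' : g (f a') = 0 := by
      have : f a' ∈ f.range := ⟨a', rfl⟩
      rw [hexact] at this; exact this
    rw [map_sub, hgvB, hb, hfa', sub_zero]
  -- main induction : surjectivity of g on q-primary torsion
  have main : ∀ j : ℕ, ∀ c ∈ qPrimaryTorsion q C,
      ∃ b ∈ qPrimaryTorsion q B, g b = (q:ℤ) ^ (N - j) • c := by
    intro j
    induction j with
    | zero =>
      intro c hc
      exact ⟨0, (qPrimaryTorsion q B).zero_mem, by rw [map_zero, Nat.sub_zero, killC c hc]⟩
    | succ j ih =>
      intro c hc
      by_cases hj : N ≤ j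
      · have heq : N - (j+1) = N - j := by omega
        rw [heq]; exact ih c hc
      · push_neg at hj
        set m := N - (j + 1) with hm
        have hm1 : N - j = m + 1 := by omega
        obtain ⟨t, ht, hgt⟩ := ih c hc
        rw [hm1] at hgt
        have he : (q:ℤ)^m • c ∈ qPrimaryTorsion q C := AddSubgroup.zsmul_mem _ hc _
        have hgt' : g t = (q:ℤ) • ((q:ℤ)^m • c) := by
          rw [hgt, ← mul_smul, ← pow_succ']
        obtain ⟨s, hs, hgs⟩ := step _ he t ht hgt'
        obtain ⟨c₀, hc₀⟩ := hC c
        have hc₀T : c₀ ∈ qPrimaryTorsion q C := by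
          refine QPT.of_smul 1 ?_
          rw [pow_one, ← hc₀]
          exact (qPrimaryTorsion q C).sub_mem (QPT.map φC hc) (AddSubgroup.zsmul_mem _ hc _)
        obtain ⟨t', ht', hgt''⟩ := ih c₀ hc₀T
        rw [hm1] at hgt''
        have hid : φC ((q:ℤ)^m • c) - lam • ((q:ℤ)^m • c)
            = (mu - lam) • ((q:ℤ)^m • c) + (q:ℤ)^(m+1) • c₀ := by
          rw [map_zsmul]
          have expand : φC c = (q:ℤ) • c₀ + mu • c := by rw [← hc₀]; abel
          rw [expand]
          module
        have hme : (mu - lam) • ((q:ℤ)^m • c) = g (s - t') := by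
          rw [map_sub, hgs, hgt'', hid]; abel
        have hN1 : N = (N - 1) + 1 := by omega
        have hb2 : (mu - lam)^N • ((q:ℤ)^m • c) = g ((mu - lam)^(N-1) • (s - t')) := by
          rw [map_zsmul, ← hme]
          conv_lhs => rw [hN1]
          rw [pow_succ, mul_smul]
        have hfin : (q:ℤ)^m • c = x • ((mu - lam)^N • ((q:ℤ)^m • c)) :=
          QPT.bezout_smul hbez (killC _ he)
        refine ⟨x • ((mu - lam)^(N-1) • (s - t')), ?_, ?_⟩
        · exact AddSubgroup.zsmul_mem _
            (AddSubgroup.zsmul_mem _ ((qPrimaryTorsion q B).sub_mem hs ht') _) _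
        · rw [map_zsmul, ← hb2, ← hfin]
  have surjT : ∀ c ∈ qPrimaryTorsion q C, ∃ b ∈ qPrimaryTorsion q B, g b = c := by
    intro c hc
    obtain ⟨b, hb, hgb⟩ := main N c hc
    rw [Nat.sub_self, pow_zero, one_smul] at hgb
    exact ⟨b, hb, hgb⟩
  -- uA relation
  have uAdAc : ∀ a : A, uA a = dA a + (lam - mu) • a := by
    intro a; rw [huA, hdA, sub_smul]; abel
  -- injectivity of uA on torsion
  have uAinj : ∀ a ∈ qPrimaryTorsion q A, uA a = 0 → a = 0 := by
    intro a ha h0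
    have hphi : φA a = mu • a := by
      have := huA a; rw [h0] at this; exact (sub_eq_zero.mp this.symm)
    have h1 : dA a = (mu - lam) • a := by rw [hdA, hphi, sub_smul]
    have h2 : ∀ j : ℕ, (dA ^ j) a = (mu - lam) ^ j • a := by
      intro j; induction j with
      | zero => rw [pow_zero, pow_zero, one_smul]; rfl
      | succ j ihj =>
        rw [QPT.end_pow_succ, ihj, map_zsmul, h1, ← mul_smul, ← pow_succ]
    obtain ⟨aN, haN⟩ := hdAiter N a
    have haNT : aN ∈ qPrimaryTorsion q A :=
      QPT.of_smul N (by rw [← haN]; exact QPT.map (dA ^ N) ha)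
    have hz : (mu - lam) ^ N • a = 0 := by rw [← h2 N, haN, killA aN haNT]
    have hfin := QPT.bezout_smul hbez (killA a ha)
    rw [hz, smul_zero] at hfin
    exact hfin
  -- surjectivity of uA on torsion
  have uAsurj : ∀ j : ℕ, ∀ a ∈ qPrimaryTorsion q A,
      ∃ w ∈ qPrimaryTorsion q A, uA w = (q:ℤ) ^ (N - j) • a := by
    intro j
    induction j with
    | zero =>
      intro a ha
      exact ⟨0, (qPrimaryTorsion q A).zero_mem, by rw [map_zero, Nat.sub_zero, killA a ha]⟩
    | succ j ih =>
      intro a ha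
      by_cases hj : N ≤ j
      · have heq : N - (j+1) = N - j := by omega
        rw [heq]; exact ih a ha
      · push_neg at hj
        set m := N - (j + 1) with hm
        have hm1 : N - j = m + 1 := by omega
        obtain ⟨a₀, ha₀⟩ := hA a
        have ha₀T : a₀ ∈ qPrimaryTorsion q A := by
          refine QPT.of_smul 1 ?_
          rw [pow_one, ← ha₀]
          exact (qPrimaryTorsion q A).sub_mem (QPT.map φA ha) (AddSubgroup.zsmul_mem _ ha _)
        obtain ⟨w, hw, hww⟩ := ih a₀ ha₀T
        rw [hm1] at hww
        have hdAa : dA a = (q:ℤ) • a₀ := by rw [hdA]; exact ha₀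
        have hkey : (mu - lam) • ((q:ℤ)^m • a) = uA (w - (q:ℤ)^m • a) := by
          rw [map_sub, hww, map_zsmul, uAdAc a, hdAa]
          module
        have hN1 : N = (N - 1) + 1 := by omega
        have hb2 : (mu - lam)^N • ((q:ℤ)^m • a) = uA ((mu - lam)^(N-1) • (w - (q:ℤ)^m • a)) := by
          rw [map_zsmul, ← hkey]
          conv_lhs => rw [hN1]
          rw [pow_succ, mul_smul]
        have heT : (q:ℤ)^m • a ∈ qPrimaryTorsion q A := AddSubgroup.zsmul_mem _ ha _
        have hfin : (q:ℤ)^m • a = x • ((mu - lam)^N • ((q:ℤ)^m • a)) :=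
          QPT.bezout_smul hbez (killA _ heT)
        refine ⟨x • ((mu - lam)^(N-1) • (w - (q:ℤ)^m • a)), ?_, ?_⟩
        · exact AddSubgroup.zsmul_mem _
            (AddSubgroup.zsmul_mem _ ((qPrimaryTorsion q A).sub_mem hw heT) _) _
        · rw [map_zsmul, ← hb2, ← hfin]
  -- dC is nilpotent on torsion
  have hdCN : ∀ c ∈ qPrimaryTorsion q C, (dC ^ N) c = 0 := by
    intro c hc
    obtain ⟨c', h⟩ := hdCiter N c
    have hc'T : c' ∈ qPrimaryTorsion q C :=
      QPT.of_smul N (by rw [← h]; exact QPT.map (dC ^ N) hc)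
    rw [h, killC c' hc'T]
  have hguBiter : ∀ (j : ℕ) (b : B), g ((uB ^ j) b) = (dC ^ j) (g b) := by
    intro j
    induction j with
    | zero => intro b; rw [pow_zero, pow_zero]; rfl
    | succ j ihj =>
      intro b
      rw [QPT.end_pow_succ, hguB, ihj, ← QPT.end_pow_succ]
  have hfuBiter : ∀ (j : ℕ) (a : A), (uB ^ j) (f a) = f ((uA ^ j) a) := by
    intro j
    induction j with
    | zero => intro a; rw [pow_zero, pow_zero]; rfl
    | succ j ihj =>
      intro a
      rw [QPT.end_pow_succ'', hfuB, ihj, ← QPT.end_pow_succ'']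
  -- uB^N lands in f of torsion of A
  have wdef : ∀ b ∈ qPrimaryTorsion q B, ∃ a ∈ qPrimaryTorsion q A, f a = (uB ^ N) b := by
    intro b hb
    have hker : (uB ^ N) b ∈ f.range := by
      rw [hexact]
      show g ((uB ^ N) b) = 0
      rw [hguBiter, hdCN (g b) (QPT.map g hb)]
    obtain ⟨a, ha⟩ := hker
    have haT : a ∈ qPrimaryTorsion q A := by
      obtain ⟨k, hk⟩ := QPT.mem_iff.mp hb
      refine QPT.mem_iff.mpr ⟨k, hf ?_⟩
      rw [map_zsmul, ha, ← map_zsmul, hk, map_zero, map_zero]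
    exact ⟨a, haT, ha⟩
  -- bundled maps on torsion subgroups
  let F : ↥(qPrimaryTorsion q A) →+ ↥(qPrimaryTorsion q B) :=
    AddMonoidHom.mk' (fun a => ⟨f ↑a, QPT.map f a.2⟩)
      (fun a b => Subtype.ext (by push_cast; rw [map_add]))
  let G2 : ↥(qPrimaryTorsion q B) →+ ↥(qPrimaryTorsion q C) :=
    AddMonoidHom.mk' (fun t => ⟨g ↑t, QPT.map g t.2⟩)
      (fun a b => Subtype.ext (by push_cast; rw [map_add]))
  let UA : AddMonoid.End ↥(qPrimaryTorsion q A) :=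
    AddMonoidHom.mk' (fun a => ⟨uA ↑a, QPT.map uA a.2⟩)
      (fun a b => Subtype.ext (by push_cast; rw [map_add]))
  have UAbij : Function.Bijective UA := by
    constructor
    · rw [injective_iff_map_eq_zero]
      intro z hz
      have h0 : uA ↑z = 0 := Subtype.ext_iff.mp hz
      exact Subtype.ext (uAinj ↑z z.2 h0)
    · intro a
      obtain ⟨w, hw, hww⟩ := uAsurj N ↑a a.2
      rw [Nat.sub_self, pow_zero, one_smul] at hww
      exact ⟨⟨w, hw⟩, Subtype.ext hww⟩
  let E := AddEquiv.ofBijective UA UAbij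
  let Es : AddMonoid.End ↥(qPrimaryTorsion q A) := E.symm.toAddMonoidHom
  -- the retraction-producing map
  let wfun : ↥(qPrimaryTorsion q B) → ↥(qPrimaryTorsion q A) :=
    fun t => ⟨(wdef ↑t t.2).choose, (wdef ↑t t.2).choose_spec.1⟩
  have hwfun : ∀ t : ↥(qPrimaryTorsion q B), f ↑(wfun t) = (uB ^ N) ↑t :=
    fun t => (wdef ↑t t.2).choose_spec.2
  let W : ↥(qPrimaryTorsion q B) →+ ↥(qPrimaryTorsion q A) :=
    AddMonoidHom.mk' wfun (fun t₁ t₂ => Subtype.ext (hf (by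
      calc f ↑(wfun (t₁ + t₂)) = (uB ^ N) ↑(t₁ + t₂) := hwfun _
        _ = (uB ^ N) (↑t₁ + ↑t₂) := rfl
        _ = (uB ^ N) ↑t₁ + (uB ^ N) ↑t₂ := map_add _ _ _
        _ = f ↑(wfun t₁) + f ↑(wfun t₂) := by rw [hwfun, hwfun]
        _ = f (↑(wfun t₁) + ↑(wfun t₂)) := (map_add _ _ _).symm
        _ = f ↑(wfun t₁ + wfun t₂) := rfl)))
  let ρ : ↥(qPrimaryTorsion q B) →+ ↥(qPrimaryTorsion q A) := (Es ^ N).comp W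
  -- coe of UA powers
  have hUAiter : ∀ (j : ℕ) (a : ↥(qPrimaryTorsion q A)), ↑((UA ^ j) a) = (uA ^ j) (↑a : A) := by
    intro j
    induction j with
    | zero => intro a; rw [pow_zero, pow_zero]; rfl
    | succ j ihj =>
      intro a
      rw [QPT.end_pow_succ, QPT.end_pow_succ, ← ihj]
      rfl
  have hWF : ∀ a : ↥(qPrimaryTorsion q A), W (F a) = (UA ^ N) a := by
    intro a
    refine Subtype.ext (hf ?_)
    calc f ↑(W (F a)) = (uB ^ N) ↑(F a) := hwfun _
      _ = (uB ^ N) (f ↑a) := rfl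
      _ = f ((uA ^ N) ↑a) := hfuBiter N ↑a
      _ = f ↑((UA ^ N) a) := by rw [hUAiter]
  have hEsU : ∀ z : ↥(qPrimaryTorsion q A), Es (UA z) = z := fun z => E.symm_apply_apply z
  have hEsUA : ∀ (j : ℕ) (a : ↥(qPrimaryTorsion q A)), (Es ^ j) ((UA ^ j) a) = a := by
    intro j
    induction j with
    | zero => intro a; rw [pow_zero, pow_zero]; rfl
    | succ j ihj =>
      intro a
      rw [QPT.end_pow_succ UA, QPT.end_pow_succ'' Es, hEsU]
      exact ihj a
  have P1 : ∀ a : ↥(qPrimaryTorsion q A), ρ (F a) = a := by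
    intro a
    show (Es ^ N) (W (F a)) = a
    rw [hWF]
    exact hEsUA N a
  -- exactness at B on torsion
  have exactT : ∀ t : ↥(qPrimaryTorsion q B), g ↑t = 0 → ∃ a : ↥(qPrimaryTorsion q A), F a = t := by
    intro t h0
    have hmem : (t : B) ∈ f.range := by rw [hexact]; exact h0
    obtain ⟨a, ha⟩ := hmem
    have haT : a ∈ qPrimaryTorsion q A := by
      obtain ⟨k, hk⟩ := QPT.mem_iff.mp t.2
      exact QPT.mem_iff.mpr ⟨k, hf (by rw [map_zsmul, ha, hk, map_zero])⟩
    exact ⟨⟨a, haT⟩, Subtype.ext ha⟩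
  have hG2F : ∀ z : ↥(qPrimaryTorsion q A), G2 (F z) = 0 := by
    intro z
    apply Subtype.ext
    show g (f ↑z) = 0
    have : f ↑z ∈ f.range := ⟨_, rfl⟩
    rw [hexact] at this
    exact this
  let Φ : ↥(qPrimaryTorsion q B) →+ ↥(qPrimaryTorsion q A) × ↥(qPrimaryTorsion q C) := ρ.prod G2
  have Φinj : Function.Injective Φ := by
    rw [injective_iff_map_eq_zero]
    intro t h0
    have h1 : ρ t = 0 := congrArg Prod.fst h0
    have h2 : G2 t = 0 := congrArg Prod.snd h0
    have hg0 : g ↑t = 0 := Subtype.ext_iff.mp h2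
    obtain ⟨a, ha⟩ := exactT t hg0
    have ha0 : a = 0 := by
      have hp := P1 a
      rw [ha, h1] at hp
      exact hp.symm
    rw [← ha, ha0, map_zero]
  have Φsurj : Function.Surjective Φ := by
    rintro ⟨a, c⟩
    obtain ⟨b, hbT, hgb⟩ := surjT ↑c c.2
    refine ⟨(⟨b, hbT⟩ : ↥(qPrimaryTorsion q B)) + F (a - ρ ⟨b, hbT⟩), ?_⟩
    have hfst : ρ (⟨b, hbT⟩ + F (a - ρ ⟨b, hbT⟩)) = a := by
      rw [map_add, P1]
      abel
    have hsnd : G2 (⟨b, hbT⟩ + F (a - ρ ⟨b, hbT⟩)) = c := by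
      rw [map_add, hG2F, add_zero]
      exact Subtype.ext hgb
    have : Φ (⟨b, hbT⟩ + F (a - ρ ⟨b, hbT⟩))
        = (ρ (⟨b, hbT⟩ + F (a - ρ ⟨b, hbT⟩)), G2 (⟨b, hbT⟩ + F (a - ρ ⟨b, hbT⟩))) := rfl
    rw [this, hfst, hsnd]
  exact ⟨AddEquiv.ofBijective Φ ⟨Φinj, Φsurj⟩⟩
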